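/- Every 2-step Sullivan algebra admits a positive weight. Explicitly: let V = V1 ⊕ V2 be a graded ℚ-vector space concentrated in positive degrees, let ΛV be the free graded-commutative ℚ-algebra on V, and let d be a differential making (ΛV,d) a dga with d(V1) = 0 and d(V2) ⊆ ΛV1. Then declaring each degree-homogeneous element x of V1 to be homogeneous of weight |x| and each degree-homogeneous element y of V2 to be homogeneous of weight |y|+1, and extending multiplicatively to monomials, defines a positive weight on (ΛV,d). -/

import Mathlib

open scoped DirectSum

namespace TwoStepAux

variable {M : Type} [AddCommGroup M] [Module ℚ M] (G : ℕ → Submodule ℚ M)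
  (hG : DirectSum.IsInternal G)

/-- The linear equivalence coming from an internal decomposition. -/
noncomputable def e : (⨁ k, ↥(G k)) ≃ₗ[ℚ] M :=
  LinearEquiv.ofBijective (DirectSum.coeLinearMap G) hG

/-- Projection onto the `k`-th graded piece, as a map `M →ₗ M`. -/
noncomputable def proj (k : ℕ) : M →ₗ[ℚ] M :=
  (G k).subtype ∘ₗ (DirectSum.component ℚ ℕ (fun j => G j) k) ∘ₗ (e G hG).symm.toLinearMap

theorem e_apply (x : ⨁ k, ↥(G k)) : e G hG x = DirectSum.coeLinearMap G x := rfl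

theorem esymm_of_mem {k : ℕ} {a : M} (h : a ∈ G k) :
    (e G hG).symm a = DirectSum.lof ℚ ℕ (fun j => ↥(G j)) k ⟨a, h⟩ := by
  rw [LinearEquiv.symm_apply_eq, e_apply, DirectSum.lof_eq_of, DirectSum.coeLinearMap_of]

theorem proj_of_mem {k : ℕ} {a : M} (h : a ∈ G k) : proj G hG k a = a := by
  simp [proj, esymm_of_mem G hG h, DirectSum.component, DirectSum.lof_eq_of,
    DFinsupp.lapply, DirectSum.of_eq_same]

theorem proj_of_mem_ne {j k : ℕ} (hjk : j ≠ k) {a : M} (h : a ∈ G k) :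
    proj G hG j a = 0 := by
  simp [proj, esymm_of_mem G hG h, DirectSum.component, DirectSum.lof_eq_of,
    DFinsupp.lapply, DirectSum.of_eq_of_ne _ _ _ hjk]

theorem eq_zero_of_proj_eq_zero {a : M} (h : ∀ k, proj G hG k a = 0) : a = 0 := by
  have h0 : (e G hG).symm a = 0 := by
    apply DFinsupp.ext
    intro k
    have hk := h k
    simp only [proj, LinearMap.comp_apply, LinearEquiv.coe_toLinearMap,
      Submodule.subtype_apply] at hk
    have h1 : (DirectSum.component ℚ ℕ (fun j => G j) k) ((e G hG).symm a) = 0 :=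
      Subtype.ext hk
    simpa [DirectSum.component, DFinsupp.lapply] using h1
  calc a = (e G hG) ((e G hG).symm a) := ((e G hG).apply_symm_apply a).symm
  _ = (e G hG) 0 := by rw [h0]
  _ = 0 := (e G hG).map_zero

/-- The map multiplying the degree-`k` part by `2^k`. -/
noncomputable def Dmap : M →ₗ[ℚ] M :=
  (DirectSum.toModule ℚ ℕ M (fun k => ((2:ℚ)^k) • (G k).subtype)) ∘ₗ
    (e G hG).symm.toLinearMap

theorem Dmap_of_mem {k : ℕ} {a : M} (h : a ∈ G k) : Dmap G hG a = ((2:ℚ)^k) • a := by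
  simp [Dmap, esymm_of_mem G hG h, DirectSum.toModule_lof]

end TwoStepAux

/-- A graded-commutative, associative, unital `ℚ`-algebra with an `ℕ`-grading. -/
structure GradedCommAlg where
  carrier : Type
  [ring : Ring carrier]
  [algebra : Algebra ℚ carrier]
  grading : ℕ → Submodule ℚ carrier
  internal : DirectSum.IsInternal grading
  one_mem : (1 : carrier) ∈ grading 0
  mul_mem : ∀ {i j : ℕ} {x y : carrier}, x ∈ grading i → y ∈ grading j → x * y ∈ grading (i + j)
  gcomm : ∀ {i j : ℕ} {x y : carrier}, x ∈ grading i → y ∈ grading j →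
      x * y = ((-1 : ℚ) ^ (i * j)) • (y * x)

attribute [instance] GradedCommAlg.ring GradedCommAlg.algebra

/-- A connected differential graded algebra (dga) over `ℚ`. -/
structure ConnectedDGA extends GradedCommAlg where
  connected : ∀ x ∈ grading 0, ∃ q : ℚ, x = q • (1 : carrier)
  d : carrier →ₗ[ℚ] carrier
  d_deg : ∀ {k : ℕ} {x : carrier}, x ∈ grading k → d x ∈ grading (k + 1)
  d_sq : ∀ x, d (d x) = 0
  leibniz : ∀ {i : ℕ} {x y : carrier}, x ∈ grading i →
      d (x * y) = d x * y + ((-1 : ℚ) ^ i) • (x * d y)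

namespace ConnectedDGA

/-- `x` is a coboundary, i.e. represents `0` in cohomology. -/
def IsCoboundary (A : ConnectedDGA) (x : A.carrier) : Prop := ∃ y, A.d y = x

/-- The (two-sided, by graded-commutativity) ideal generated by a set `S`. -/
def mulIdeal (A : ConnectedDGA) (S : Set A.carrier) : Submodule ℚ A.carrier :=
  Submodule.span ℚ {x : A.carrier | ∃ r : A.carrier, ∃ s ∈ S, x = r * s}

end ConnectedDGA

/-- A weight on a connected dga: a bigraded decomposition compatible with `d` and products. -/
structure Weight (A : ConnectedDGA) where
  w : ℕ → ℤ → Submodule ℚ A.carrier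
  internal : DirectSum.IsInternal (fun p : ℕ × ℤ => w p.1 p.2)
  grading_eq : ∀ k, A.grading k = ⨆ n, w k n
  d_mem : ∀ {k : ℕ} {n : ℤ} {x : A.carrier}, x ∈ w k n → A.d x ∈ w (k + 1) n
  mul_mem : ∀ {k l : ℕ} {n m : ℤ} {x y : A.carrier},
      x ∈ w k n → y ∈ w l m → x * y ∈ w (k + l) (n + m)

namespace Weight

/-- The weight-`n` part of `A`. An element of `piece n` (nonzero) is `ω`-homogeneous
of weight `n`. -/
def piece {A : ConnectedDGA} (W : Weight A) (n : ℤ) : Submodule ℚ A.carrier := ⨆ k, W.w k n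

/-- A weight is positive if the negative pieces vanish and the weight `0` piece is `A^0`. -/
def Positive {A : ConnectedDGA} (W : Weight A) : Prop :=
  (∀ n : ℤ, n < 0 → W.piece n = ⊥) ∧ W.piece 0 = A.grading 0

end Weight

/-- A dga morphism: degree-preserving algebra homomorphism commuting with differentials. -/
structure Hom (A B : ConnectedDGA) where
  toFun : A.carrier →ₐ[ℚ] B.carrier
  map_grading : ∀ {k : ℕ} {x : A.carrier}, x ∈ A.grading k → toFun x ∈ B.grading k
  map_d : ∀ x, B.d (toFun x) = toFun (A.d x)

/-- `ν` is a representative of the fundamental class of a dga whose cohomology is a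
Poincaré duality algebra of formal dimension `N`. -/
structure PoincareDuality (A : ConnectedDGA) (N : ℕ) (ν : A.carrier) : Prop where
  mem : ν ∈ A.grading N
  cocycle : A.d ν = 0
  not_bdry : ¬ A.IsCoboundary ν
  top_vanish : ∀ k : ℕ, N < k → ∀ x ∈ A.grading k, A.d x = 0 → A.IsCoboundary x
  top_span : ∀ x ∈ A.grading N, A.d x = 0 → ∃ q : ℚ, A.IsCoboundary (x - q • ν)
  nondeg : ∀ k : ℕ, k ≤ N → ∀ x ∈ A.grading k, A.d x = 0 → ¬ A.IsCoboundary x →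
      ∃ y ∈ A.grading (N - k), A.d y = 0 ∧ ¬ A.IsCoboundary (x * y)

/-- `A` is free graded-commutative on the positively graded subspace `V`: universal property
of the free graded-commutative algebra. -/
def IsFreeGCA (A : GradedCommAlg) (V : ℕ → Submodule ℚ A.carrier) : Prop :=
  (∀ k, V k ≤ A.grading k) ∧ V 0 = ⊥ ∧
  ∀ (B : GradedCommAlg) (f : A.carrier →ₗ[ℚ] B.carrier),
    (∀ k, ∀ x ∈ V k, f x ∈ B.grading k) →
    ∃! g : A.carrier →ₐ[ℚ] B.carrier,
      (∀ (k : ℕ) (x : A.carrier), x ∈ A.grading k → g x ∈ B.grading k) ∧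
      (∀ k, ∀ x ∈ V k, g x = f x)

/-- every 2-step Sullivan algebra `(Λ(V1 ⊕ V2), d)` with `d(V1) = 0` and
`d(V2) ⊆ ΛV1` admits a positive weight, given on generators by `ω(x) = |x|` for `x ∈ V1`
and `ω(y) = |y| + 1` for `y ∈ V2`, extended multiplicatively. -/
theorem two_step_sullivan_has_positive_weight (A : ConnectedDGA)
    (V1 V2 : ℕ → Submodule ℚ A.carrier)
    (hfree : IsFreeGCA A.toGradedCommAlg (fun k => V1 k ⊔ V2 k))
    (hdisj : ∀ k, Disjoint (V1 k) (V2 k))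
    (hdV1 : ∀ k, ∀ x ∈ V1 k, A.d x = 0)
    (hdV2 : ∀ k, ∀ y ∈ V2 k, A.d y ∈ Algebra.adjoin ℚ (⋃ k, (V1 k : Set A.carrier))) :
    ∃ W : Weight A, W.Positive ∧
      (∀ k : ℕ, ∀ x ∈ V1 k, x ∈ W.piece (k : ℤ)) ∧
      (∀ k : ℕ, ∀ y ∈ V2 k, y ∈ W.piece ((k : ℤ) + 1)) := by
  classical
  obtain ⟨hVg, hV0, UP⟩ := hfree
  have hV1g : ∀ k, V1 k ≤ A.grading k := fun k => le_trans le_sup_left (hVg k)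
  have hV2g : ∀ k, V2 k ≤ A.grading k := fun k => le_trans le_sup_right (hVg k)
  have hV10 : V1 0 = ⊥ := le_bot_iff.mp (le_trans le_sup_left hV0.le)
  have hV20 : V2 0 = ⊥ := le_bot_iff.mp (le_trans le_sup_right hV0.le)
  have gInd : iSupIndep A.grading := A.internal.submodule_iSupIndep
  -- the projections onto graded pieces
  set proj : ℕ → A.carrier →ₗ[ℚ] A.carrier :=
    fun k => TwoStepAux.proj A.grading A.internal k with hproj
  have proj_mem : ∀ {k : ℕ} {a : A.carrier}, a ∈ A.grading k → proj k a = a :=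
    fun h => TwoStepAux.proj_of_mem A.grading A.internal h
  have proj_ne : ∀ {j k : ℕ}, j ≠ k → ∀ {a : A.carrier}, a ∈ A.grading k → proj j a = 0 :=
    fun h _ ha => TwoStepAux.proj_of_mem_ne A.grading A.internal h ha
  have proj_zero : ∀ {a : A.carrier}, (∀ k, proj k a = 0) → a = 0 :=
    fun h => TwoStepAux.eq_zero_of_proj_eq_zero A.grading A.internal h
  have projInto : ∀ (W : ℕ → Submodule ℚ A.carrier), (∀ j, W j ≤ A.grading j) →
      ∀ (k : ℕ) (x : A.carrier), x ∈ (⨆ j, W j) → proj k x ∈ W k := by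
    intro W hW k x hx
    refine Submodule.iSup_induction (motive := fun y => proj k y ∈ W k) W hx ?_ ?_ ?_
    · intro i y hy
      rcases eq_or_ne k i with rfl | hne
      · rw [proj_mem (hW _ hy)]; exact hy
      · rw [proj_ne hne (hW _ hy)]; exact zero_mem _
    · show proj k (0:A.carrier) ∈ W k
      rw [map_zero]; exact zero_mem _
    · intro y z hy hz
      show proj k (y + z) ∈ W k
      rw [map_add]; exact add_mem hy hz
  -- d kills 1
  have d_one : A.d (1 : A.carrier) = 0 := by
    have h := A.leibniz (i := 0) A.one_mem (y := (1 : A.carrier))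
    simp only [mul_one, one_mul, pow_zero, one_smul] at h
    have h2 : A.d (1 : A.carrier) + A.d 1 = A.d 1 + 0 := by rw [add_zero]; exact h.symm
    exact add_left_cancel h2
  -- build the linear map f used to define σ
  set T : Submodule ℚ A.carrier := ⨆ k, (V1 k ⊔ V2 k) with hT
  obtain ⟨CT, hCT⟩ := Submodule.exists_isCompl T
  set projT : A.carrier →ₗ[ℚ] A.carrier :=
    T.subtype ∘ₗ Submodule.projectionOnto T CT hCT with hprojT
  have projT_mem : ∀ x, projT x ∈ T := fun x => (Submodule.projectionOnto T CT hCT x).2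
  have projT_eq : ∀ x ∈ T, projT x = x := by
    intro x hx
    show (T.subtype) (Submodule.projectionOnto T CT hCT x) = x
    rw [show x = ((⟨x, hx⟩ : T) : A.carrier) from rfl,
      Submodule.projectionOnto_apply_left]
    rfl
  set V1sup : Submodule ℚ A.carrier := ⨆ k, V1 k with hV1sup
  set V2sup : Submodule ℚ A.carrier := ⨆ k, V2 k with hV2sup
  have disjV12 : Disjoint V1sup V2sup := by
    rw [Submodule.disjoint_def]
    intro x hx1 hx2
    refine proj_zero fun k => ?_
    have h1 : proj k x ∈ V1 k := projInto V1 hV1g k x hx1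
    have h2 : proj k x ∈ V2 k := projInto V2 hV2g k x hx2
    exact (Submodule.disjoint_def.mp (hdisj k)) _ h1 h2
  obtain ⟨C0, hC0⟩ := Submodule.exists_isCompl (V1sup ⊔ V2sup)
  set K : Submodule ℚ A.carrier := V1sup ⊔ C0 with hK0
  have hK : IsCompl V2sup K := by
    constructor
    · rw [Submodule.disjoint_def]
      intro a ha haK
      obtain ⟨b, hb, c, hc, hbc⟩ := Submodule.mem_sup.mp haK
      have hcm : c ∈ V1sup ⊔ V2sup := by
        have hce : c = a - b := eq_sub_of_add_eq (by rw [add_comm]; exact hbc)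
        rw [hce]
        exact sub_mem (Submodule.mem_sup_right ha) (Submodule.mem_sup_left hb)
      have hc0 : c = 0 := (Submodule.disjoint_def.mp hC0.disjoint) c hcm hc
      have hab : a = b := by rw [← hbc, hc0, add_zero]
      exact (Submodule.disjoint_def.mp disjV12) a (hab ▸ hb) ha
    · rw [codisjoint_iff, hK0,
        show V2sup ⊔ (V1sup ⊔ C0) = (V1sup ⊔ V2sup) ⊔ C0 by
          rw [← sup_assoc, sup_comm V2sup V1sup]]
      exact codisjoint_iff.mp hC0.codisjoint
  set P2 : A.carrier →ₗ[ℚ] A.carrier :=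
    V2sup.subtype ∘ₗ Submodule.projectionOnto V2sup K hK with hP2
  have P2_ofK : ∀ x ∈ K, P2 x = 0 := by
    intro x hx
    show V2sup.subtype _ = 0
    rw [Submodule.projectionOnto_apply_of_mem_right hK hx, map_zero]
  have P2_ofV2 : ∀ x ∈ V2sup, P2 x = x := by
    intro x hx
    show V2sup.subtype _ = x
    rw [show x = ((⟨x, hx⟩ : V2sup) : A.carrier) from rfl,
      Submodule.projectionOnto_apply_left]
    rfl
  set Dm := TwoStepAux.Dmap A.grading A.internal with hDm
  have Dm_mem : ∀ {k} {a : A.carrier}, a ∈ A.grading k → Dm a = ((2:ℚ)^k) • a :=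
    fun h => TwoStepAux.Dmap_of_mem A.grading A.internal h
  set f : A.carrier →ₗ[ℚ] A.carrier := Dm ∘ₗ (LinearMap.id + P2) with hf
  have f1 : ∀ (k) (x), x ∈ V1 k → f x = ((2:ℚ)^k) • x := by
    intro k x hx
    have hxK : x ∈ K := Submodule.mem_sup_left (Submodule.mem_iSup_of_mem k hx)
    have hfx : f x = Dm (x + P2 x) := rfl
    rw [hfx, P2_ofK x hxK, add_zero, Dm_mem (hV1g k hx)]
  have f2 : ∀ (k) (y), y ∈ V2 k → f y = ((2:ℚ)^(k+1)) • y := by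
    intro k y hy
    have hyV : y ∈ V2sup := Submodule.mem_iSup_of_mem k hy
    have hfy : f y = Dm (y + P2 y) := rfl
    rw [hfy, P2_ofV2 y hyV, Dm_mem (k := k) (add_mem (hV2g k hy) (hV2g k hy)),
      smul_add, ← add_smul]
    congr 1
    rw [pow_succ]; ring
  have hfV : ∀ (k), ∀ x ∈ V1 k ⊔ V2 k, f x ∈ A.grading k := by
    intro k x hx
    obtain ⟨a, ha, b, hb, hab⟩ := Submodule.mem_sup.mp hx
    have : f x = ((2:ℚ)^k) • a + ((2:ℚ)^(k+1)) • b := by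
      rw [← hab, map_add, f1 k a ha, f2 k b hb]
    rw [this]
    exact add_mem (Submodule.smul_mem _ _ (hV1g k ha)) (Submodule.smul_mem _ _ (hV2g k hb))
  obtain ⟨σ, ⟨σgrad, σV⟩, σuniq⟩ := UP A.toGradedCommAlg f hfV
  have σ1 : ∀ (k) (x), x ∈ V1 k → σ x = ((2:ℚ)^k) • x := by
    intro k x hx
    rw [σV k x (Submodule.mem_sup_left hx), f1 k x hx]
  have σ2 : ∀ (k) (y), y ∈ V2 k → σ y = ((2:ℚ)^(k+1)) • y := by
    intro k y hy
    rw [σV k y (Submodule.mem_sup_right hy), f2 k y hy]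
  -- the generating set and the subalgebra it generates
  set SV1 : Set A.carrier := ⋃ k, (V1 k : Set A.carrier) with hSV1
  set S' : Set A.carrier := SV1 ∪ ⋃ k, (V2 k : Set A.carrier) with hS'
  set S : Subalgebra ℚ A.carrier := Algebra.adjoin ℚ S' with hS
  -- monomials are homogeneous eigenvectors
  have hmono : ∀ m ∈ Submonoid.closure S', ∃ k n : ℕ, m ∈ A.grading k ∧
      σ m = ((2:ℚ)^n) • m ∧ k ≤ n ∧ (k = 0 → n = 0) := by
    intro m hm
    refine Submonoid.closure_induction (motive := fun m _ => ∃ k n : ℕ, m ∈ A.grading k ∧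
      σ m = ((2:ℚ)^n) • m ∧ k ≤ n ∧ (k = 0 → n = 0)) ?_ ?_ ?_ hm
    · rintro x (hx | hx)
      · obtain ⟨k, hk⟩ := Set.mem_iUnion.mp hx
        exact ⟨k, k, hV1g k hk, σ1 k x hk, le_rfl, fun h => h⟩
      · obtain ⟨k, hk⟩ := Set.mem_iUnion.mp hx
        rcases eq_or_ne k 0 with rfl | hkne
        · have hx0 : x = 0 := by rw [hV20] at hk; exact hk
          refine ⟨0, 0, ?_, ?_, le_rfl, fun _ => rfl⟩
          · rw [hx0]; exact zero_mem _
          · rw [hx0, map_zero, smul_zero]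
        · exact ⟨k, k+1, hV2g k hk, σ2 k x hk, Nat.le_succ k, fun h => absurd h hkne⟩
    · exact ⟨0, 0, A.one_mem, by rw [map_one, pow_zero, one_smul], le_rfl, fun _ => rfl⟩
    · rintro x y hx hy ⟨k1, n1, h1, s1, l1, z1⟩ ⟨k2, n2, h2, s2, l2, z2⟩
      refine ⟨k1+k2, n1+n2, A.mul_mem h1 h2, ?_, Nat.add_le_add l1 l2, ?_⟩
      · rw [map_mul, s1, s2, smul_mul_assoc, mul_smul_comm, smul_smul, ← pow_add]
      · intro h
        obtain ⟨e1, e2⟩ := Nat.add_eq_zero.mp h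
        rw [z1 e1, z2 e2]
  have hmonoV1 : ∀ m ∈ Submonoid.closure SV1, ∃ k : ℕ, m ∈ A.grading k ∧
      σ m = ((2:ℚ)^k) • m := by
    intro m hm
    refine Submonoid.closure_induction (motive := fun m _ => ∃ k : ℕ, m ∈ A.grading k ∧
      σ m = ((2:ℚ)^k) • m) ?_ ?_ ?_ hm
    · intro x hx
      obtain ⟨k, hk⟩ := Set.mem_iUnion.mp hx
      exact ⟨k, hV1g k hk, σ1 k x hk⟩
    · exact ⟨0, A.one_mem, by rw [map_one, pow_zero, one_smul]⟩
    · rintro x y hx hy ⟨k1, h1, s1⟩ ⟨k2, h2, s2⟩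
      refine ⟨k1+k2, A.mul_mem h1 h2, ?_⟩
      rw [map_mul, s1, s2, smul_mul_assoc, mul_smul_comm, smul_smul, ← pow_add]
  have adjV1 : ∀ a ∈ Algebra.adjoin ℚ SV1, ∀ m, σ (proj m a) = ((2:ℚ)^m) • proj m a := by
    intro a ha
    have ha' : a ∈ Submodule.span ℚ (Submonoid.closure SV1 : Set A.carrier) := by
      rw [← Algebra.adjoin_eq_span]
      exact (Subalgebra.mem_toSubmodule _).mpr ha
    refine Submodule.span_induction
      (p := fun a _ => ∀ m, σ (proj m a) = ((2:ℚ)^m) • proj m a) ?_ ?_ ?_ ?_ ha'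
    · intro x hx m
      obtain ⟨k, hk, hs⟩ := hmonoV1 x hx
      rcases eq_or_ne m k with rfl | hne
      · rw [proj_mem hk]; exact hs
      · rw [proj_ne hne hk, map_zero, smul_zero]
    · intro m; rw [map_zero, map_zero, smul_zero]
    · intro x y _ _ px py m; rw [map_add, map_add, px, py, smul_add]
    · intro q x _ px m; rw [map_smul, map_smul, px, smul_comm]
  -- σ commutes with d on monomials
  have σd_cl : ∀ m ∈ Submonoid.closure S',
      (∃ k, m ∈ A.grading k) ∧ σ (A.d m) = A.d (σ m) := by
    intro m hm
    refine Submonoid.closure_induction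
      (motive := fun m _ => (∃ k, m ∈ A.grading k) ∧ σ (A.d m) = A.d (σ m)) ?_ ?_ ?_ hm
    · rintro x (hx | hx)
      · obtain ⟨k, hk⟩ := Set.mem_iUnion.mp hx
        refine ⟨⟨k, hV1g k hk⟩, ?_⟩
        rw [hdV1 k x hk, map_zero, σ1 k x hk, map_smul, hdV1 k x hk, smul_zero]
      · obtain ⟨k, hk⟩ := Set.mem_iUnion.mp hx
        refine ⟨⟨k, hV2g k hk⟩, ?_⟩
        have hdy : A.d x ∈ A.grading (k+1) := A.d_deg (hV2g k hk)
        have h1 : σ (A.d x) = ((2:ℚ)^(k+1)) • A.d x := by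
          have h2 := adjV1 (A.d x) (hdV2 k x hk) (k+1)
          rwa [proj_mem hdy] at h2
        rw [h1, σ2 k x hk, map_smul]
    · refine ⟨⟨0, A.one_mem⟩, ?_⟩
      rw [d_one, map_zero, map_one, d_one]
    · rintro x y hx hy ⟨⟨i, hxi⟩, hdx⟩ ⟨⟨j, hyj⟩, hdy⟩
      refine ⟨⟨i + j, A.mul_mem hxi hyj⟩, ?_⟩
      have e1 : σ (A.d (x*y)) = A.d (σ x) * σ y + ((-1:ℚ)^i) • (σ x * A.d (σ y)) := by
        rw [A.leibniz hxi, map_add, map_mul, map_smul, map_mul, hdx, hdy]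
      rw [e1, map_mul, A.leibniz (σgrad i x hxi)]
  -- the subalgebra S is everything
  have hV1S : ∀ k, ∀ x ∈ V1 k, x ∈ S := fun k x hx =>
    Algebra.subset_adjoin (Or.inl (Set.mem_iUnion.mpr ⟨k, hx⟩))
  have hV2S : ∀ k, ∀ x ∈ V2 k, x ∈ S := fun k x hx =>
    Algebra.subset_adjoin (Or.inr (Set.mem_iUnion.mpr ⟨k, hx⟩))
  have hTS : ∀ x ∈ T, x ∈ S := by
    intro x hx
    refine Submodule.iSup_induction (motive := fun y => y ∈ S) _ hx ?_ (zero_mem S)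
      (fun a b ha hb => add_mem ha hb)
    intro i y hy
    obtain ⟨a, haV, b, hbV, hab⟩ := Submodule.mem_sup.mp hy
    rw [← hab]
    exact add_mem (hV1S i a haV) (hV2S i b hbV)
  set Sk : ℕ → Submodule ℚ S := fun k => (A.grading k).comap (S.val.toLinearMap) with hSkdef
  have SkInd : iSupIndep Sk := by
    intro k
    rw [Submodule.disjoint_def]
    intro s hs hsup
    have hle : Submodule.map S.val.toLinearMap (⨆ j, ⨆ _ : j ≠ k, Sk j) ≤
        ⨆ j, ⨆ _ : j ≠ k, A.grading j := by
      rw [Submodule.map_iSup]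
      refine iSup_mono fun j => ?_
      rw [Submodule.map_iSup]
      exact iSup_mono fun hj => Submodule.map_comap_le _ _
    have h1 : (s : A.carrier) ∈ ⨆ j, ⨆ _ : j ≠ k, A.grading j :=
      hle (Submodule.mem_map_of_mem hsup)
    have h0 : (s : A.carrier) = 0 := (Submodule.disjoint_def.mp (gInd k)) s hs h1
    exact Subtype.ext h0
  have SkTop : (⨆ k, Sk k) = ⊤ := by
    rw [eq_top_iff]
    rintro ⟨a, haS⟩ _
    have key : ∀ (a : A.carrier),
        a ∈ Submodule.span ℚ (Submonoid.closure S' : Set A.carrier) →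
        ∀ h : a ∈ S, (⟨a, h⟩ : S) ∈ ⨆ k, Sk k := by
      intro a ha
      refine Submodule.span_induction
        (p := fun a _ => ∀ h : a ∈ S, (⟨a, h⟩ : S) ∈ ⨆ k, Sk k) ?_ ?_ ?_ ?_ ha
      · intro x hx h
        obtain ⟨k, n, hk, -, -, -⟩ := hmono x hx
        exact Submodule.mem_iSup_of_mem k hk
      · intro h
        have : (⟨0, h⟩ : S) = 0 := rfl
        rw [this]; exact zero_mem _
      · intro x y hx hy px py h
        have hxS : x ∈ S := by
          rw [← Subalgebra.mem_toSubmodule, hS, Algebra.adjoin_eq_span]; exact hx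
        have hyS : y ∈ S := by
          rw [← Subalgebra.mem_toSubmodule, hS, Algebra.adjoin_eq_span]; exact hy
        have : (⟨x + y, h⟩ : S) = ⟨x, hxS⟩ + ⟨y, hyS⟩ := rfl
        rw [this]; exact add_mem (px hxS) (py hyS)
      · intro q x hx px h
        have hxS : x ∈ S := by
          rw [← Subalgebra.mem_toSubmodule, hS, Algebra.adjoin_eq_span]; exact hx
        have : (⟨q • x, h⟩ : S) = q • ⟨x, hxS⟩ := rfl
        rw [this]; exact Submodule.smul_mem _ _ (px hxS)
    have haSp : a ∈ Submodule.span ℚ (Submonoid.closure S' : Set A.carrier) := by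
      rw [← Algebra.adjoin_eq_span]
      exact (Subalgebra.mem_toSubmodule _).mpr haS
    exact key a haSp haS
  set Sgc : GradedCommAlg :=
    { carrier := ↥S
      grading := Sk
      internal := DirectSum.isInternal_submodule_of_iSupIndep_of_iSup_eq_top SkInd SkTop
      one_mem := by
        show ((1 : S) : A.carrier) ∈ A.grading 0
        rw [OneMemClass.coe_one]
        exact A.one_mem
      mul_mem := by
        intro i j x y hx hy
        show ((x * y : S) : A.carrier) ∈ A.grading (i + j)
        rw [MulMemClass.coe_mul]
        exact A.mul_mem hx hy
      gcomm := by
        intro i j x y hx hy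
        apply Subtype.ext
        push_cast
        exact A.gcomm hx hy } with hSgc
  set f₀ : A.carrier →ₗ[ℚ] ↥S :=
    { toFun := fun a => ⟨projT a, hTS _ (projT_mem a)⟩
      map_add' := fun a b => Subtype.ext (by simp)
      map_smul' := fun q a => Subtype.ext (by simp) } with hf₀
  have hf₀V : ∀ (k), ∀ x ∈ V1 k ⊔ V2 k, f₀ x ∈ Sk k := by
    intro k x hx
    show projT x ∈ A.grading k
    rw [projT_eq x (Submodule.mem_iSup_of_mem k hx)]
    exact hVg k hx
  obtain ⟨g₀, ⟨g₀grad, g₀V⟩, -⟩ := UP Sgc f₀ hf₀V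
  obtain ⟨gid, -, gidU⟩ := UP A.toGradedCommAlg LinearMap.id (fun k x hx => hVg k hx)
  have hid : (AlgHom.id ℚ A.carrier) = gid :=
    gidU _ ⟨fun k x hx => hx, fun k x _ => rfl⟩
  have hg0 : (S.val.comp g₀) = gid := by
    refine gidU _ ⟨fun k x hx => g₀grad k x hx, fun k x hx => ?_⟩
    show ((g₀ x : S) : A.carrier) = x
    rw [g₀V k x hx]
    show projT x = x
    exact projT_eq x (Submodule.mem_iSup_of_mem k hx)
  have Stop : ∀ a : A.carrier, a ∈ S := by
    intro a
    have h1 : ((g₀ a : S) : A.carrier) = a := by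
      have h2 := congrArg (fun (g : A.carrier →ₐ[ℚ] A.carrier) => g a) (hg0.trans hid.symm)
      simpa using h2
    rw [← h1]; exact (g₀ a).2
  have memSpanAll : ∀ a : A.carrier,
      a ∈ Submodule.span ℚ (Submonoid.closure S' : Set A.carrier) := by
    intro a
    rw [← Algebra.adjoin_eq_span]
    exact (Subalgebra.mem_toSubmodule _).mpr (Stop a)
  have σd : ∀ a, σ (A.d a) = A.d (σ a) := by
    intro a
    refine Submodule.span_induction (p := fun a _ => σ (A.d a) = A.d (σ a)) ?_ ?_ ?_ ?_
      (memSpanAll a)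
    · intro x hx; exact (σd_cl x hx).2
    · show σ (A.d (0:A.carrier)) = A.d (σ 0)
      rw [map_zero, map_zero, map_zero]
    · intro x y _ _ px py
      show σ (A.d (x + y)) = A.d (σ (x + y))
      rw [map_add, map_add, px, py, map_add, map_add]
    · intro q x _ px
      show σ (A.d (q • x)) = A.d (σ (q • x))
      rw [map_smul, map_smul, px, map_smul, map_smul]
  -- eigenspaces
  set eig : ℚ → Submodule ℚ A.carrier :=
    fun μ => Module.End.eigenspace (σ.toLinearMap) μ with heig
  have mem_eig : ∀ {μ : ℚ} {a : A.carrier}, a ∈ eig μ ↔ σ a = μ • a :=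
    fun {μ a} => Module.End.mem_eigenspace_iff
  have eigInd : iSupIndep eig := Module.End.eigenspaces_iSupIndep σ.toLinearMap
  have pow2ne : ∀ {m n : ℤ}, m ≠ n → ((2:ℚ)^m ≠ (2:ℚ)^n) := by
    intro m n h he
    exact h (zpow_right_injective₀ (by norm_num : (0:ℚ) < 2) (by norm_num) he)
  have eigNat : ∀ n : ℕ, ((2:ℚ)^(n:ℤ)) = ((2:ℚ)^n) := fun n => zpow_natCast 2 n
  -- spanning by homogeneous eigenvectors
  have hspanW : ∀ a : A.carrier, a ∈ ⨆ (p : ℕ × ℕ) (_ : p.1 ≤ p.2 ∧ (p.1 = 0 → p.2 = 0)),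
      (A.grading p.1 ⊓ eig ((2:ℚ)^p.2)) := by
    intro a
    refine Submodule.span_le.mpr ?_ (memSpanAll a)
    intro m hm
    obtain ⟨k, n, h1, h2, h3, h4⟩ := hmono m hm
    exact Submodule.mem_iSup_of_mem (k, n) (Submodule.mem_iSup_of_mem ⟨h3, h4⟩
      ⟨h1, mem_eig.mpr h2⟩)
  -- the weight pieces
  set w : ℕ → ℤ → Submodule ℚ A.carrier := fun k n => A.grading k ⊓ eig ((2:ℚ)^n) with hw
  have wInd : iSupIndep (fun p : ℕ × ℤ => w p.1 p.2) := by
    rintro ⟨k, n⟩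
    rw [Submodule.disjoint_def]
    rintro a ⟨hak, han⟩ hsup
    have hb : (⨆ (q : ℕ × ℤ) (_ : q ≠ (k, n)), w q.1 q.2) ≤
        (⨆ j, ⨆ _ : j ≠ k, A.grading j) ⊔
          (A.grading k ⊓ ⨆ (m : ℤ) (_ : m ≠ n), eig ((2:ℚ)^m)) := by
      refine iSup₂_le ?_
      rintro ⟨k', m⟩ hq
      rcases eq_or_ne k' k with rfl | hk'
      · have hm : m ≠ n := fun h => hq (by rw [h])
        refine le_trans ?_ le_sup_right
        exact inf_le_inf_left _ (le_iSup₂ (f := fun (m : ℤ) (_ : m ≠ n) => eig ((2:ℚ)^m)) m hm)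
      · exact le_trans inf_le_left
          (le_trans (le_iSup₂ (f := fun (j : ℕ) (_ : j ≠ k) => A.grading j) k' hk') le_sup_left)
    obtain ⟨b, hb1, c, hc1, hbc⟩ := Submodule.mem_sup.mp (hb hsup)
    have hbk : b ∈ A.grading k := by
      have hbe : b = a - c := eq_sub_of_add_eq hbc
      rw [hbe]; exact sub_mem hak hc1.1
    have hb0 : b = 0 := (Submodule.disjoint_def.mp (gInd k)) b hbk hb1
    have hac : a = c := by rw [← hbc, hb0, zero_add]
    have h2 : a ∈ ⨆ (μ : ℚ) (_ : μ ≠ (2:ℚ)^n), eig μ := by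
      have h3 : (⨆ (m : ℤ) (_ : m ≠ n), eig ((2:ℚ)^m)) ≤
          ⨆ (μ : ℚ) (_ : μ ≠ (2:ℚ)^n), eig μ := by
        refine iSup₂_le fun m hm => ?_
        exact le_iSup₂ (f := fun (μ : ℚ) (_ : μ ≠ (2:ℚ)^n) => eig μ) ((2:ℚ)^m) (pow2ne hm)
      rw [hac]
      exact h3 hc1.2
    exact (Submodule.disjoint_def.mp (eigInd ((2:ℚ)^n))) a han h2
  have wTop : (⨆ p : ℕ × ℤ, w p.1 p.2) = ⊤ := by
    rw [eq_top_iff]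
    intro a _
    have hle : (⨆ (p : ℕ × ℕ) (_ : p.1 ≤ p.2 ∧ (p.1 = 0 → p.2 = 0)),
        (A.grading p.1 ⊓ eig ((2:ℚ)^p.2))) ≤ ⨆ p : ℕ × ℤ, w p.1 p.2 := by
      refine iSup₂_le ?_
      rintro ⟨k, n⟩ _
      have hterm : A.grading k ⊓ eig ((2:ℚ)^n) = w k (n : ℤ) := by
        rw [hw]; dsimp only; rw [eigNat]
      rw [hterm]
      exact le_iSup (fun p : ℕ × ℤ => w p.1 p.2) (k, (n : ℤ))
    exact hle (hspanW a)
  have grEq : ∀ k, A.grading k = ⨆ n : ℤ, w k n := by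
    intro k
    refine le_antisymm ?_ (iSup_le fun n => inf_le_left)
    intro a ha
    have hb : (⨆ (p : ℕ × ℕ) (_ : p.1 ≤ p.2 ∧ (p.1 = 0 → p.2 = 0)),
        (A.grading p.1 ⊓ eig ((2:ℚ)^p.2))) ≤
        (⨆ n : ℤ, w k n) ⊔ (⨆ j, ⨆ _ : j ≠ k, A.grading j) := by
      refine iSup₂_le ?_
      rintro ⟨k', n⟩ _
      rcases eq_or_ne k' k with rfl | hk'
      · refine le_trans ?_ le_sup_left
        have hterm : A.grading k' ⊓ eig ((2:ℚ)^n) = w k' (n : ℤ) := by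
          rw [hw]; dsimp only; rw [eigNat]
        rw [hterm]
        exact le_iSup (fun n : ℤ => w k' n) (n : ℤ)
      · exact le_trans inf_le_left
          (le_trans (le_iSup₂ (f := fun (j : ℕ) (_ : j ≠ k) => A.grading j) k' hk') le_sup_right)
    obtain ⟨b, hb1, c, hc1, hbc⟩ := Submodule.mem_sup.mp (hb (hspanW a))
    have hbk : b ∈ A.grading k := (iSup_le (fun n : ℤ => inf_le_left) : _ ≤ A.grading k) hb1
    have hck : c ∈ A.grading k := by
      have hce : c = a - b := eq_sub_of_add_eq (by rw [add_comm]; exact hbc)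
      rw [hce]; exact sub_mem ha hbk
    have hc0 : c = 0 := (Submodule.disjoint_def.mp (gInd k)) c hck hc1
    have : a = b := by rw [← hbc, hc0, add_zero]
    rw [this]; exact hb1
  -- assemble the weight
  refine ⟨⟨w, DirectSum.isInternal_submodule_of_iSupIndep_of_iSup_eq_top wInd wTop, grEq,
    ?_, ?_⟩, ⟨?_, ?_⟩, ?_, ?_⟩
  · -- d_mem
    rintro k n x ⟨hx1, hx2⟩
    refine ⟨A.d_deg hx1, mem_eig.mpr ?_⟩
    rw [σd, mem_eig.mp hx2, map_smul]
  · -- mul_mem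
    rintro k l n m x y ⟨hx1, hx2⟩ ⟨hy1, hy2⟩
    refine ⟨A.mul_mem hx1 hy1, mem_eig.mpr ?_⟩
    rw [map_mul, mem_eig.mp hx2, mem_eig.mp hy2, smul_mul_assoc, mul_smul_comm, smul_smul,
      ← zpow_add₀ (by norm_num : (2:ℚ) ≠ 0)]
  · -- negative pieces vanish
    intro n hn
    rw [Weight.piece, eq_bot_iff]
    refine iSup_le fun k => ?_
    rintro a ⟨-, ha2⟩
    have hb : (⨆ (p : ℕ × ℕ) (_ : p.1 ≤ p.2 ∧ (p.1 = 0 → p.2 = 0)),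
        (A.grading p.1 ⊓ eig ((2:ℚ)^p.2))) ≤ ⨆ (μ : ℚ) (_ : μ ≠ (2:ℚ)^n), eig μ := by
      refine iSup₂_le ?_
      rintro ⟨k', m⟩ _
      refine le_trans inf_le_right ?_
      have hne : ((2:ℚ)^m : ℚ) ≠ (2:ℚ)^n := by
        rw [← eigNat m]
        exact pow2ne (by omega)
      exact le_iSup₂ (f := fun (μ : ℚ) (_ : μ ≠ (2:ℚ)^n) => eig μ) ((2:ℚ)^m) hne
    have h2 := hb (hspanW a)
    exact (Submodule.disjoint_def.mp (eigInd ((2:ℚ)^n))) a ha2 h2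
  · -- piece 0 = grading 0
    have hg0eig : A.grading 0 ≤ eig 1 := by
      intro a ha
      obtain ⟨q, hq⟩ := A.connected a ha
      rw [mem_eig, hq, map_smul, map_one, one_smul]
    rw [Weight.piece]
    refine le_antisymm (iSup_le fun k => ?_) ?_
    · rintro a ⟨ha1, ha2⟩
      have hb : (⨆ (p : ℕ × ℕ) (_ : p.1 ≤ p.2 ∧ (p.1 = 0 → p.2 = 0)),
          (A.grading p.1 ⊓ eig ((2:ℚ)^p.2))) ≤
          A.grading 0 ⊔ ⨆ (μ : ℚ) (_ : μ ≠ (1:ℚ)), eig μ := by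
        refine iSup₂_le ?_
        rintro ⟨k', m⟩ hcond
        rcases eq_or_ne m 0 with rfl | hm
        · have hk'0 : k' = 0 := Nat.le_zero.mp hcond.1
          subst hk'0
          exact le_trans inf_le_left le_sup_left
        · refine le_trans inf_le_right (le_trans ?_ le_sup_right)
          have hne : ((2:ℚ)^m : ℚ) ≠ 1 := by
            have : ((2:ℚ)^m : ℚ) ≠ (2:ℚ)^(0:ℤ) := by
              rw [← eigNat m]
              exact pow2ne (by omega)
            simpa using this
          exact le_iSup₂ (f := fun (μ : ℚ) (_ : μ ≠ (1:ℚ)) => eig μ) ((2:ℚ)^m) hne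
      obtain ⟨b, hb1, c, hc1, hbc⟩ := Submodule.mem_sup.mp (hb (hspanW a))
      have ha2' : a ∈ eig 1 := by
        have h1 : ((2:ℚ)^(0:ℤ) : ℚ) = 1 := by norm_num
        rwa [h1] at ha2
      have hce : c = a - b := eq_sub_of_add_eq (by rw [add_comm]; exact hbc)
      have hc1' : c ∈ eig 1 := by
        rw [hce]; exact sub_mem ha2' (hg0eig hb1)
      have hc0 : c = 0 := (Submodule.disjoint_def.mp (eigInd 1)) c hc1' hc1
      have hab : a = b := by rw [← hbc, hc0, add_zero]
      rw [hab]; exact hb1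
    · intro a ha
      refine Submodule.mem_iSup_of_mem 0 ?_
      refine ⟨ha, ?_⟩
      have h1 : ((2:ℚ)^(0:ℤ) : ℚ) = 1 := by norm_num
      rw [h1]
      exact hg0eig ha
  · -- V1 k is in piece k
    intro k x hx
    rw [Weight.piece]
    refine Submodule.mem_iSup_of_mem k ⟨hV1g k hx, mem_eig.mpr ?_⟩
    rw [eigNat]
    exact σ1 k x hx
  · -- V2 k is in piece (k+1)
    intro k y hy
    rw [Weight.piece]
    refine Submodule.mem_iSup_of_mem k ⟨hV2g k hy, mem_eig.mpr ?_⟩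
    have h1 : ((k : ℤ) + 1) = ((k + 1 : ℕ) : ℤ) := by push_cast; ring
    rw [h1, eigNat]
    exact σ2 k y hy
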